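/- If both players play the crossout strategy on a dinner D of n morsels, they eat the morsels in exactly the reverse order of the crossout sequence: the morsel eaten on turn i is m_{n+1−i}. In particular, Bob's last bite is Alice's least favourite morsel m_1. -/

import Mathlib

open Finset

/-- One step of the crossout process: at Alice's steps remove the remaining morsel of
minimal first coordinate, at Bob's steps the one of minimal second coordinate. -/
noncomputable def coAux (turnA : Bool) (D : Finset (ℝ × ℝ)) : List (ℝ × ℝ) :=
  if h : D.Nonempty then
    (if turnA then (Finset.exists_min_image D Prod.fst h).choose
      else (Finset.exists_min_image D Prod.snd h).choose) ::
      coAux (!turnA)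
        (D.erase (if turnA then (Finset.exists_min_image D Prod.fst h).choose
          else (Finset.exists_min_image D Prod.snd h).choose))
  else []
termination_by D.card
decreasing_by
  apply Finset.card_erase_lt_of_mem
  split
  · exact (Finset.exists_min_image D Prod.fst h).choose_spec.1
  · exact (Finset.exists_min_image D Prod.snd h).choose_spec.1

/-- The crossout sequence of a dinner, as a list `[m₁, m₂, …, mₙ]`. -/
noncomputable def crossoutList (D : Finset (ℝ × ℝ)) : List (ℝ × ℝ) := coAux true D

/-- `crossout D i` is the `i`-th morsel `mᵢ` (1-indexed) of the crossout sequence of `D`. -/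
noncomputable def crossout (D : Finset (ℝ × ℝ)) (i : ℕ) : ℝ × ℝ :=
  (crossoutList D).getD (i - 1) (0, 0)

/-- Totally ordered preferences: distinct morsels have distinct first coordinates and
distinct second coordinates. -/
def TotallyOrderedPrefs (D : Finset (ℝ × ℝ)) : Prop :=
  (∀ p ∈ D, ∀ q ∈ D, p.1 = q.1 → p = q) ∧ (∀ p ∈ D, ∀ q ∈ D, p.2 = q.2 → p = q)

/-- Alice's crossout score: sum of first coordinates of the even-indexed crossout morsels. -/
noncomputable def chiA (D : Finset (ℝ × ℝ)) : ℝ :=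
  ∑ i ∈ Finset.Icc 1 D.card, if Even i then (crossout D i).1 else 0

/-- Bob's crossout score: sum of second coordinates of the odd-indexed crossout morsels. -/
noncomputable def chiB (D : Finset (ℝ × ℝ)) : ℝ :=
  ∑ i ∈ Finset.Icc 1 D.card, if Odd i then (crossout D i).2 else 0
/-- The crossout strategy: eat the last morsel of the crossout sequence. -/
noncomputable def crossoutStrategy (D : Finset (ℝ × ℝ)) : ℝ × ℝ := crossout D D.card

noncomputable def coChoice (b : Bool) (D : Finset (ℝ × ℝ)) (h : D.Nonempty) : ℝ × ℝ :=
  if b then (Finset.exists_min_image D Prod.fst h).choose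
    else (Finset.exists_min_image D Prod.snd h).choose

lemma coAux_eq (b : Bool) (D : Finset (ℝ × ℝ)) :
    coAux b D = if h : D.Nonempty then
      coChoice b D h :: coAux (!b) (D.erase (coChoice b D h)) else [] := by
  rw [coAux]; rfl

lemma coChoice_mem (b : Bool) (D : Finset (ℝ × ℝ)) (h : D.Nonempty) : coChoice b D h ∈ D := by
  unfold coChoice
  cases b
  · exact (Finset.exists_min_image D Prod.snd h).choose_spec.1
  · exact (Finset.exists_min_image D Prod.fst h).choose_spec.1

lemma coAux_subset (D : Finset (ℝ × ℝ)) : ∀ (b : Bool), ∀ x ∈ coAux b D, x ∈ D := by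
  induction D using Finset.strongInduction with
  | _ D ih =>
    intro b x hx
    rw [coAux_eq] at hx
    split at hx
    · rename_i h
      rcases List.mem_cons.1 hx with rfl | hx'
      · exact coChoice_mem b D h
      · exact Finset.mem_of_mem_erase
          (ih _ (Finset.erase_ssubset (coChoice_mem b D h)) _ _ hx')
    · simp at hx

lemma coAux_length (D : Finset (ℝ × ℝ)) : ∀ (b : Bool), (coAux b D).length = D.card := by
  induction D using Finset.strongInduction with
  | _ D ih =>
    intro b
    rw [coAux_eq]
    split
    · rename_i h
      simp [ih _ (Finset.erase_ssubset (coChoice_mem b D h)),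
        Finset.card_erase_of_mem (coChoice_mem b D h),
        Nat.sub_add_cancel (Finset.card_pos.2 h)]
    · rename_i h
      simp [Finset.not_nonempty_iff_eq_empty.1 h]

lemma coAux_nodup (D : Finset (ℝ × ℝ)) : ∀ (b : Bool), (coAux b D).Nodup := by
  induction D using Finset.strongInduction with
  | _ D ih =>
    intro b
    rw [coAux_eq]
    split
    · rename_i h
      refine List.nodup_cons.2 ⟨fun hc => ?_, ih _ (Finset.erase_ssubset (coChoice_mem b D h)) _⟩
      exact (Finset.notMem_erase _ _) (coAux_subset _ _ _ hc)
    · exact List.nodup_nil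

lemma TOP_subset {D E : Finset (ℝ × ℝ)} (hD : TotallyOrderedPrefs D) (hE : E ⊆ D) :
    TotallyOrderedPrefs E :=
  ⟨fun p hp q hq => hD.1 p (hE hp) q (hE hq), fun p hp q hq => hD.2 p (hE hp) q (hE hq)⟩

lemma coChoice_unique (b : Bool) {D E : Finset (ℝ × ℝ)} (hD : TotallyOrderedPrefs D)
    (hE : E ⊆ D) (hne : E.Nonempty) (hDne : D.Nonempty)
    (hmem : coChoice b D hDne ∈ E) : coChoice b E hne = coChoice b D hDne := by
  cases b
  · have h1 := (Finset.exists_min_image E Prod.snd hne).choose_spec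
    have h2 := (Finset.exists_min_image D Prod.snd hDne).choose_spec
    have hc : coChoice false E hne = (Finset.exists_min_image E Prod.snd hne).choose := rfl
    have hc2 : coChoice false D hDne = (Finset.exists_min_image D Prod.snd hDne).choose := rfl
    rw [hc, hc2]
    refine hD.2 _ (hE h1.1) _ (hE hmem) (le_antisymm (h1.2 _ hmem) (h2.2 _ (hE h1.1)))
  · have h1 := (Finset.exists_min_image E Prod.fst hne).choose_spec
    have h2 := (Finset.exists_min_image D Prod.fst hDne).choose_spec
    have hc : coChoice true E hne = (Finset.exists_min_image E Prod.fst hne).choose := rfl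
    have hc2 : coChoice true D hDne = (Finset.exists_min_image D Prod.fst hDne).choose := rfl
    rw [hc, hc2]
    refine hD.1 _ (hE h1.1) _ (hE hmem) (le_antisymm (h1.2 _ hmem) (h2.2 _ (hE h1.1)))

lemma coAux_prefix (D : Finset (ℝ × ℝ)) :
    ∀ (b : Bool) (k : ℕ), TotallyOrderedPrefs D →
      coAux b (((coAux b D).take k).toFinset) = (coAux b D).take k := by
  induction D using Finset.strongInduction with
  | _ D ih =>
    intro b k hD
    rcases Nat.eq_zero_or_pos k with rfl | hk
    · simp [coAux_eq (D := (∅ : Finset (ℝ × ℝ)))]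
    by_cases h : D.Nonempty
    swap
    · rw [coAux_eq b D, dif_neg h]
      simp [coAux_eq (D := (∅ : Finset (ℝ × ℝ)))]
    obtain ⟨j, rfl⟩ := Nat.exists_eq_add_of_lt hk
    rw [coAux_eq b D, dif_pos h]
    set m := coChoice b D h with hm
    set L' := coAux (!b) (D.erase m) with hL'
    have hsub : (L'.take j).toFinset ⊆ D.erase m := fun x hx =>
      coAux_subset _ _ _ (List.mem_of_mem_take (List.mem_toFinset.1 hx))
    have hmnot : m ∉ (L'.take j).toFinset := fun hc => Finset.notMem_erase _ _ (hsub hc)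
    simp only [zero_add, List.take_succ_cons, List.toFinset_cons]
    have hne : (insert m (L'.take j).toFinset).Nonempty := ⟨m, Finset.mem_insert_self _ _⟩
    have hsubD : insert m (L'.take j).toFinset ⊆ D := by
      intro x hx
      rcases Finset.mem_insert.1 hx with rfl | hx
      · exact coChoice_mem b D h
      · exact Finset.mem_of_mem_erase (hsub hx)
    rw [coAux_eq, dif_pos hne]
    have hcc : coChoice b (insert m (L'.take j).toFinset) hne = m :=
      coChoice_unique b hD hsubD hne h (Finset.mem_insert_self _ _)
    rw [hcc, Finset.erase_insert hmnot]
    congr 1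
    exact ih _ (Finset.erase_ssubset (coChoice_mem b D h)) (!b) j
      (TOP_subset hD (Finset.erase_subset _ _))


/-- Under mutual crossout play the morsels are eaten in reverse order of the crossout
sequence: after m_n, …, m_{k+1} are eaten, the remaining dinner is {m_1, …, m_k} and
the crossout strategy eats m_k from it.  In particular the last bite,
taken by Bob, is m_1, Alice's least favourite morsel of D. -/
theorem crossout_play_reverse (D : Finset (ℝ × ℝ)) (hD : TotallyOrderedPrefs D) :
    (∀ k : ℕ, 1 ≤ k → k ≤ D.card →
      crossoutStrategy (((crossoutList D).take k).toFinset) = crossout D k) ∧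
    (D.Nonempty → crossout D 1 ∈ D ∧ ∀ m ∈ D, (crossout D 1).1 ≤ m.1) := by
  constructor
  · intro k hk1 hk2
    have hlen : (crossoutList D).length = D.card := coAux_length D true
    have hnd : ((crossoutList D).take k).Nodup :=
      (coAux_nodup D true).sublist (List.take_sublist _ _)
    have htlen : ((crossoutList D).take k).length = k := by
      rw [List.length_take]; omega
    have hcard : (((crossoutList D).take k).toFinset).card = k := by
      rw [List.toFinset_card_of_nodup hnd]; exact htlen
    have hpre : crossoutList (((crossoutList D).take k).toFinset) = (crossoutList D).take k :=
      coAux_prefix D true k hD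
    unfold crossoutStrategy crossout
    rw [hpre, hcard]
    have h1 : k - 1 < ((crossoutList D).take k).length := by omega
    rw [List.getD_eq_getElem _ _ h1,
      List.getD_eq_getElem _ _ (by omega : k - 1 < (crossoutList D).length)]
    exact List.getElem_take
  · intro h
    have heq : crossout D 1 = coChoice true D h := by
      unfold crossout crossoutList
      rw [coAux_eq, dif_pos h]
      rfl
    have hspec := (Finset.exists_min_image D Prod.fst h).choose_spec
    have : coChoice true D h = (Finset.exists_min_image D Prod.fst h).choose := rfl
    rw [heq, this]
    exact ⟨hspec.1, hspec.2⟩
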